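/- Let A be a finite set in R^d and suppose each point a ∈ A is associated a probability density p_a on R^d with mean μ_a and covariance Σ_a. If a center x is drawn by first picking a0 uniformly from A and then sampling x ~ p_{a0}, then the expected potential E[∑_{a∈A} ||a - x||²] equals φ_opt(A) + φ_opt^N(A), where φ_opt(A) = ∑_{a∈A}||a - c(A)||² and φ_opt^N(A) = ∑_{a∈A} E_{x~p_a}||x - c(A)||². -/

import Mathlib

open MeasureTheory

theorem stmt_2 {d : ℕ} (A : Finset (EuclideanSpace ℝ (Fin d))) (hA : A.Nonempty)
    (p : EuclideanSpace ℝ (Fin d) → Measure (EuclideanSpace ℝ (Fin d)))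
    (hp : ∀ a ∈ A, IsProbabilityMeasure (p a))
    (c : EuclideanSpace ℝ (Fin d)) (hc : c = (A.card : ℝ)⁻¹ • ∑ a ∈ A, a)
    (hint : ∀ a ∈ A, Integrable (fun x => ‖x - c‖ ^ 2) (p a)) :
    (A.card : ℝ)⁻¹ * ∑ a0 ∈ A, ∫ x, (∑ a ∈ A, ‖a - x‖ ^ 2) ∂(p a0)
      = (∑ a ∈ A, ‖a - c‖ ^ 2) + ∑ a ∈ A, ∫ x, ‖x - c‖ ^ 2 ∂(p a) := by
  have hcard : (A.card : ℝ) ≠ 0 := by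
    exact_mod_cast hA.card_ne_zero
  have hsum : ∑ a ∈ A, (a - c) = 0 := by
    rw [Finset.sum_sub_distrib, Finset.sum_const, sub_eq_zero, hc,
      ← Nat.cast_smul_eq_nsmul ℝ, smul_smul, mul_inv_cancel₀ hcard, one_smul]
  have key : ∀ x, ∑ a ∈ A, ‖a - x‖ ^ 2
      = (∑ a ∈ A, ‖a - c‖ ^ 2) + (A.card : ℝ) * ‖x - c‖ ^ 2 := by
    intro x
    have h1 : ∀ a : EuclideanSpace ℝ (Fin d),
        ‖a - x‖ ^ 2 = ‖a - c‖ ^ 2 - 2 * inner ℝ (a - c) (x - c) + ‖x - c‖ ^ 2 := by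
      intro a
      have h2 : a - x = (a - c) - (x - c) := by abel
      rw [h2, norm_sub_sq_real]
    simp_rw [h1]
    rw [Finset.sum_add_distrib, Finset.sum_sub_distrib, ← Finset.mul_sum,
      ← sum_inner, hsum, inner_zero_left, Finset.sum_const, nsmul_eq_mul]
    ring
  have hint2 : ∀ a0 ∈ A, ∫ x, (∑ a ∈ A, ‖a - x‖ ^ 2) ∂(p a0)
      = (∑ a ∈ A, ‖a - c‖ ^ 2) + (A.card : ℝ) * ∫ x, ‖x - c‖ ^ 2 ∂(p a0) := by
    intro a0 ha0
    haveI := hp a0 ha0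
    have : (fun x => ∑ a ∈ A, ‖a - x‖ ^ 2)
        = fun x => (∑ a ∈ A, ‖a - c‖ ^ 2) + (A.card : ℝ) * ‖x - c‖ ^ 2 := by
      funext x; exact key x
    rw [this, integral_add (integrable_const _) ((hint a0 ha0).const_mul _),
      integral_const, integral_const_mul]
    simp
  rw [Finset.sum_congr rfl hint2, Finset.sum_add_distrib, Finset.sum_const,
    nsmul_eq_mul, ← Finset.mul_sum]
  field_simp
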